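/- For every y ∈ [0,1]: Σ_{n=1}^N K_n·KI_n(y) = 1, where K_n = S_n^{-1} − 1 and S_n = Σ_{j∈Ω} p_j/k_{n,j}. -/

import Mathlib

open Set

noncomputable section

/-- `T_ω = T_{ω_t} ∘ ⋯ ∘ T_{ω_1}` (head of the list applied first). -/
def rwordApply (T : ℕ → ℝ → ℝ) : List ℕ → ℝ → ℝ
  | [], y => y
  | j :: ω, y => rwordApply T ω (T j y)

/-- the weighted slope product `δ_ω(y,|ω|)`; `ι x` is the index of the
partition interval containing `x`. -/
def rdelta (p : ℕ → ℝ) (k : ℕ → ℕ → ℝ) (ι : ℝ → ℕ) (T : ℕ → ℝ → ℝ) :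
    List ℕ → ℝ → ℝ
  | [], _ => 1
  | j :: ω, y => p j / k (ι y) j * rdelta p k ι T ω (T j y)

/-- the random piecewise linear map with slopes `k`, intercepts `d`. -/
def Tpl (k d : ℕ → ℕ → ℝ) (ι : ℝ → ℕ) (j : ℕ) (x : ℝ) : ℝ :=
  k (ι x) j * x + d (ι x) j

/-- finite words with letters in `Ωs`. -/
def Words (Ωs : Set ℕ) : Type := {ω : List ℕ // ∀ j ∈ ω, j ∈ Ωs}

/-- `KI_n(y) = Σ_{t≥1} Σ_{ω ∈ Ωᵗ} δ_ω(y,t)·1_{I_n}(T_{ω₁^{t-1}}(y))`. -/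
def KI (Ωs : Set ℕ) (p : ℕ → ℝ) (k : ℕ → ℕ → ℝ) (ι : ℝ → ℕ) (T : ℕ → ℝ → ℝ)
    (n : ℕ) (y : ℝ) : ℝ :=
  ∑' ω : {ω : List ℕ // (∀ j ∈ ω, j ∈ Ωs) ∧ ω ≠ []},
    if ι (rwordApply T ω.1.dropLast y) = n then rdelta p k ι T ω.1 y else 0

/-- `KA_i(y) = Σ_{t≥0} Σ_{ω ∈ Ωᵗ} δ_ω(y,t)·1_{I_1 ∪ ⋯ ∪ I_i}(T_ω(y))`. -/
def KA (Ωs : Set ℕ) (p : ℕ → ℝ) (k : ℕ → ℕ → ℝ) (ι : ℝ → ℕ) (T : ℕ → ℝ → ℝ)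
    (i : ℕ) (y : ℝ) : ℝ :=
  ∑' ω : Words Ωs,
    if ι (rwordApply T ω.1 y) ≤ i then rdelta p k ι T ω.1 y else 0

/-- `KB_i(y) = Σ_{t≥0} Σ_{ω ∈ Ωᵗ} δ_ω(y,t)·1_{I_{i+1} ∪ ⋯ ∪ I_N}(T_ω(y))`. -/
def KB (Ωs : Set ℕ) (p : ℕ → ℝ) (k : ℕ → ℕ → ℝ) (ι : ℝ → ℕ) (T : ℕ → ℝ → ℝ)
    (i : ℕ) (y : ℝ) : ℝ :=
  ∑' ω : Words Ωs,
    if i < ι (rwordApply T ω.1 y) then rdelta p k ι T ω.1 y else 0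

/-- `S_n = Σ_{j∈Ω} p_j / k_{n,j}`, the average inverse slope on `I_n`. -/
def Sav (Ωs : Set ℕ) (p : ℕ → ℝ) (k : ℕ → ℕ → ℝ) (n : ℕ) : ℝ :=
  ∑' j : Ωs, p j.1 / k n j.1

namespace Stmt4Aux

/-- the absolute-value version of `rdelta`. -/
def rAbs (p : ℕ → ℝ) (k : ℕ → ℕ → ℝ) (ι : ℝ → ℕ) (T : ℕ → ℝ → ℝ) : List ℕ → ℝ → ℝ
  | [], _ => 1
  | j :: ω, y => p j / |k (ι y) j| * rAbs p k ι T ω (T j y)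

variable {Ωs : Set ℕ} {p : ℕ → ℝ} {k : ℕ → ℕ → ℝ} {ι : ℝ → ℕ} {T : ℕ → ℝ → ℝ} {N : ℕ} {ρ : ℝ}

lemma rAbs_nonneg (hp : ∀ j ∈ Ωs, 0 < p j) :
    ∀ (ω : List ℕ), (∀ j ∈ ω, j ∈ Ωs) → ∀ y, 0 ≤ rAbs p k ι T ω y
  | [], _, y => by simp [rAbs]
  | j :: ω, h, y => by
      have h2 := rAbs_nonneg hp ω (fun i hi => h i (List.mem_cons_of_mem _ hi)) (T j y)
      have hpj := (hp j (h j (List.mem_cons_self))).le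
      exact mul_nonneg (div_nonneg hpj (abs_nonneg _)) h2

lemma abs_rdelta (hp : ∀ j ∈ Ωs, 0 < p j) :
    ∀ (ω : List ℕ), (∀ j ∈ ω, j ∈ Ωs) → ∀ y,
      |rdelta p k ι T ω y| = rAbs p k ι T ω y
  | [], _, y => by simp [rdelta, rAbs]
  | j :: ω, h, y => by
      rw [rdelta, rAbs, abs_mul, abs_div, abs_of_pos (hp j (h j (List.mem_cons_self))),
        abs_rdelta hp ω (fun i hi => h i (List.mem_cons_of_mem _ hi)) (T j y)]

lemma rword_mem (hT : ∀ j ∈ Ωs, ∀ x ∈ Icc (0:ℝ) 1, T j x ∈ Icc (0:ℝ) 1) :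
    ∀ (ω : List ℕ), (∀ j ∈ ω, j ∈ Ωs) → ∀ y ∈ Icc (0:ℝ) 1,
      rwordApply T ω y ∈ Icc (0:ℝ) 1
  | [], _, y, hy => hy
  | j :: ω, h, y, hy =>
      rword_mem hT ω (fun i hi => h i (List.mem_cons_of_mem _ hi)) (T j y)
        (hT j (h j (List.mem_cons_self)) y hy)

lemma rdelta_append : ∀ (ω : List ℕ) (j : ℕ) (y : ℝ),
    rdelta p k ι T (ω ++ [j]) y
      = rdelta p k ι T ω y * (p j / k (ι (rwordApply T ω y)) j)
  | [], j, y => by simp [rdelta, rwordApply]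
  | i :: ω, j, y => by
      simp only [List.cons_append, rdelta, rwordApply, List.append_eq,
        rdelta_append ω j (T i y)]
      ring

/-- words of fixed length. -/
def WL (Ωs : Set ℕ) (t : ℕ) : Type :=
  {ω : List ℕ // (∀ j ∈ ω, j ∈ Ωs) ∧ ω.length = t}

def sigmaEquiv (Ωs : Set ℕ) : Words Ωs ≃ Σ t, WL Ωs t where
  toFun ω := ⟨ω.1.length, ⟨ω.1, ω.2, rfl⟩⟩
  invFun x := ⟨x.2.1, x.2.2.1⟩
  left_inv ω := rfl
  right_inv := by rintro ⟨t, ⟨ω, h, rfl⟩⟩; rfl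

def consEquiv (Ωs : Set ℕ) (t : ℕ) : Ωs × WL Ωs t ≃ WL Ωs (t + 1) where
  toFun x := ⟨x.1.1 :: x.2.1,
    ⟨fun j hj => by
      rcases List.mem_cons.1 hj with h | h
      · exact h ▸ x.1.2
      · exact x.2.2.1 j h, by simp [x.2.2.2]⟩⟩
  invFun x := match x with
    | ⟨[], h⟩ => absurd h.2 (by simp)
    | ⟨j :: ω, h⟩ =>
        (⟨j, h.1 j (List.mem_cons_self)⟩,
         ⟨ω, fun i hi => h.1 i (List.mem_cons_of_mem _ hi), by simpa using h.2⟩)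
  left_inv x := by
    rcases x with ⟨⟨j, hj⟩, ⟨ω, hω⟩⟩
    simp
  right_inv x := by
    rcases x with ⟨l, hl, ht⟩
    cases l with
    | nil => simp at ht
    | cons a l => rfl


lemma WL_summable (hp : ∀ j ∈ Ωs, 0 < p j)
    (hι : ∀ x ∈ Icc (0:ℝ) 1, ι x ∈ Finset.Icc 1 N)
    (hT : ∀ j ∈ Ωs, ∀ x ∈ Icc (0:ℝ) 1, T j x ∈ Icc (0:ℝ) 1)
    (hA2 : ∀ n ∈ Finset.Icc 1 N,
      Summable (fun j : Ωs => p j.1 / |k n j.1|) ∧ ∑' j : Ωs, p j.1 / |k n j.1| ≤ ρ)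
    (hρ0 : 0 < ρ) :
    ∀ t : ℕ, ∀ y ∈ Icc (0:ℝ) 1,
      Summable (fun ω : WL Ωs t => rAbs p k ι T ω.1 y) ∧
      ∑' ω : WL Ωs t, rAbs p k ι T ω.1 y ≤ ρ ^ t := by
  intro t
  induction t with
  | zero =>
    intro y hy
    haveI : Unique (WL Ωs 0) :=
      ⟨⟨⟨[], by simp, rfl⟩⟩, fun ω => Subtype.ext (List.length_eq_zero_iff.1 ω.2.2)⟩
    constructor
    · exact .of_finite
    · have h := tsum_eq_single (L := SummationFilter.unconditional _) (f := fun ω : WL Ωs 0 => rAbs p k ι T ω.1 y)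
        (⟨[], by simp, rfl⟩ : WL Ωs 0)
        (fun b hb => absurd (Subtype.ext (List.length_eq_zero_iff.1 b.2.2)) hb)
      rw [h]
      simp [rAbs]
  | succ t IH =>
    intro y hy
    have hmem : ι y ∈ Finset.Icc 1 N := hι y hy
    set c : Ωs → ℝ := fun j => p j.1 / |k (ι y) j.1| with hc
    have hc0 : ∀ j : Ωs, 0 ≤ c j := fun j => div_nonneg (hp j.1 j.2).le (abs_nonneg _)
    have hcs : Summable c := (hA2 _ hmem).1
    have hcρ : ∑' j, c j ≤ ρ := (hA2 _ hmem).2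
    set f : Ωs × WL Ωs t → ℝ := fun x => c x.1 * rAbs p k ι T x.2.1 (T x.1.1 y) with hf
    have hmemT : ∀ j : Ωs, T j.1 y ∈ Icc (0:ℝ) 1 := fun j => hT j.1 j.2 y hy
    have hf0 : ∀ x, 0 ≤ f x := fun x => mul_nonneg (hc0 _) (rAbs_nonneg hp _ x.2.2.1 _)
    have h1 : ∀ j : Ωs, Summable fun τ : WL Ωs t => f (j, τ) := by
      intro j
      show Summable fun τ : WL Ωs t => c j * rAbs p k ι T τ.1 (T j.1 y)
      exact ((IH (T j.1 y) (hmemT j)).1).mul_left _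
    have h2 : ∀ j : Ωs, ∑' τ : WL Ωs t, f (j, τ) ≤ c j * ρ ^ t := by
      intro j
      rw [show (fun τ : WL Ωs t => f (j, τ)) = fun τ : WL Ωs t =>
        c j * rAbs p k ι T τ.1 (T j.1 y) from rfl, tsum_mul_left]
      exact mul_le_mul_of_nonneg_left (IH (T j.1 y) (hmemT j)).2 (hc0 j)
    have h3 : Summable fun j : Ωs => ∑' τ : WL Ωs t, f (j, τ) :=
      Summable.of_nonneg_of_le (fun j => tsum_nonneg fun τ => hf0 _) h2 (hcs.mul_right _)
    have hfs : Summable f := (summable_prod_of_nonneg hf0).2 ⟨h1, h3⟩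
    have hfts : ∑' x, f x ≤ ρ ^ (t + 1) := by
      rw [Summable.tsum_prod' hfs h1]
      calc (∑' j : Ωs, ∑' τ : WL Ωs t, f (j, τ)) ≤ ∑' j : Ωs, c j * ρ ^ t :=
            Summable.tsum_le_tsum h2 h3 (hcs.mul_right _)
        _ = (∑' j : Ωs, c j) * ρ ^ t := tsum_mul_right
        _ ≤ ρ * ρ ^ t := mul_le_mul_of_nonneg_right hcρ (pow_nonneg hρ0.le t)
        _ = ρ ^ (t + 1) := by ring
    have hcomp : (fun ω : WL Ωs (t + 1) => rAbs p k ι T ω.1 y) ∘ (consEquiv Ωs t) = f := by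
      funext x; rfl
    have hs : Summable (fun ω : WL Ωs (t + 1) => rAbs p k ι T ω.1 y) :=
      (consEquiv Ωs t).summable_iff.1 (hcomp ▸ hfs)
    refine ⟨hs, ?_⟩
    rw [← (consEquiv Ωs t).tsum_eq (fun ω : WL Ωs (t + 1) => rAbs p k ι T ω.1 y)]
    exact le_of_le_of_eq (le_of_eq (tsum_congr fun x => congrFun hcomp x)) rfl |>.trans hfts

lemma words_summable (hp : ∀ j ∈ Ωs, 0 < p j)
    (hι : ∀ x ∈ Icc (0:ℝ) 1, ι x ∈ Finset.Icc 1 N)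
    (hT : ∀ j ∈ Ωs, ∀ x ∈ Icc (0:ℝ) 1, T j x ∈ Icc (0:ℝ) 1)
    (hA2 : ∀ n ∈ Finset.Icc 1 N,
      Summable (fun j : Ωs => p j.1 / |k n j.1|) ∧ ∑' j : Ωs, p j.1 / |k n j.1| ≤ ρ)
    (hρ0 : 0 < ρ) (hρ1 : ρ < 1) {y : ℝ} (hy : y ∈ Icc (0:ℝ) 1) :
    Summable (fun ω : Words Ωs => rAbs p k ι T ω.1 y) := by
  have h0 : ∀ x : Σ t, WL Ωs t, 0 ≤ rAbs p k ι T x.2.1 y :=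
    fun x => rAbs_nonneg hp _ x.2.2.1 y
  have hs : Summable (fun x : Σ t, WL Ωs t => rAbs p k ι T x.2.1 y) := by
    refine (summable_sigma_of_nonneg h0).2
      ⟨fun t => (WL_summable hp hι hT hA2 hρ0 t y hy).1, ?_⟩
    exact Summable.of_nonneg_of_le (fun t => tsum_nonneg fun ω => h0 ⟨t, ω⟩)
      (fun t => (WL_summable hp hι hT hA2 hρ0 t y hy).2)
      (summable_geometric_of_lt_one hρ0.le hρ1)
  exact ((sigmaEquiv Ωs).summable_iff
    (f := fun x : Σ t, WL Ωs t => rAbs p k ι T x.2.1 y)).2 hs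

end Stmt4Aux

set_option maxHeartbeats 2000000 in
/-- for every `y ∈ [0,1]`, `Σ_{n=1}^N K_n · KI_n(y) = 1`,
where `K_n = S_n⁻¹ − 1`. -/
theorem stmt_4 (Ωs : Set ℕ) (N : ℕ) (hN : 1 ≤ N) (p : ℕ → ℝ) (ρ : ℝ)
    (hρ0 : 0 < ρ) (hρ1 : ρ < 1)
    (hp : ∀ j ∈ Ωs, 0 < p j) (hpsum : HasSum (fun j : Ωs => p j.1) 1)
    (k d : ℕ → ℕ → ℝ) (ι : ℝ → ℕ)
    (hι : ∀ x ∈ Icc (0:ℝ) 1, ι x ∈ Finset.Icc 1 N)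
    (hk : ∀ n ∈ Finset.Icc 1 N, ∀ j ∈ Ωs, k n j ≠ 0)
    (hT : ∀ j ∈ Ωs, ∀ x ∈ Icc (0:ℝ) 1, Tpl k d ι j x ∈ Icc (0:ℝ) 1)
    (hA2 : ∀ n ∈ Finset.Icc 1 N,
      Summable (fun j : Ωs => p j.1 / |k n j.1|) ∧
        ∑' j : Ωs, p j.1 / |k n j.1| ≤ ρ)
    (hS : ∀ n ∈ Finset.Icc 1 N, Sav Ωs p k n ≠ 0) :
    ∀ y ∈ Icc (0:ℝ) 1,
      ∑ n ∈ Finset.Icc 1 N, ((Sav Ωs p k n)⁻¹ - 1) * KI Ωs p k ι (Tpl k d ι) n y = 1 := by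
  classical
  intro y hy
  set T := Tpl k d ι with hTdef
  have hmemT : ∀ (ω : List ℕ), (∀ j ∈ ω, j ∈ Ωs) → rwordApply T ω y ∈ Icc (0:ℝ) 1 :=
    fun ω hω => Stmt4Aux.rword_mem hT ω hω y hy
  have hSumAbs : Summable (fun ω : Words Ωs => Stmt4Aux.rAbs p k ι T ω.1 y) :=
    Stmt4Aux.words_summable hp hι hT hA2 hρ0 hρ1 hy
  have habs : ∀ (ω : List ℕ), (∀ j ∈ ω, j ∈ Ωs) →
      |rdelta p k ι T ω y| = Stmt4Aux.rAbs p k ι T ω y :=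
    fun ω hω => Stmt4Aux.abs_rdelta hp ω hω y
  set F : Words Ωs → ℝ := fun ω => rdelta p k ι T ω.1 y with hF
  have hSumF : Summable F :=
    Summable.of_abs (hSumAbs.congr fun ω => (habs ω.1 ω.2).symm)
  set g : ℕ → Words Ωs → ℝ :=
    fun n ω => if ι (rwordApply T ω.1 y) = n then F ω else 0 with hg
  have hgabs : ∀ n (ω : Words Ωs), |g n ω| ≤ Stmt4Aux.rAbs p k ι T ω.1 y := by
    intro n ω
    rw [hg]
    dsimp only
    split_ifs
    · exact le_of_eq (habs ω.1 ω.2)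
    · simpa using Stmt4Aux.rAbs_nonneg hp ω.1 ω.2 y
  have hSumg : ∀ n, Summable (g n) := fun n =>
    Summable.of_abs (Summable.of_nonneg_of_le (fun ω => abs_nonneg _) (hgabs n) hSumAbs)
  set J : ℕ → ℝ := fun n => ∑' ω, g n ω with hJ
  -- Step A : ∑ n, J n = full sum
  have stepA : ∑ n ∈ Finset.Icc 1 N, J n = ∑' ω : Words Ωs, F ω := by
    rw [hJ]
    rw [← Summable.tsum_finsetSum (fun n _ => hSumg n)]
    apply tsum_congr
    intro ω
    rw [hg]
    dsimp only
    rw [Finset.sum_ite_eq (Finset.Icc 1 N) (ι (rwordApply T ω.1 y)) (fun _ => F ω),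
      if_pos (hι _ (hmemT ω.1 ω.2))]
  -- nonempty words
  set Fp : {ω : List ℕ // (∀ j ∈ ω, j ∈ Ωs) ∧ ω ≠ []} → ℝ :=
    fun ω => rdelta p k ι T ω.1 y with hFp
  have hinj : Function.Injective
      (fun ω : {ω : List ℕ // (∀ j ∈ ω, j ∈ Ωs) ∧ ω ≠ []} => (⟨ω.1, ω.2.1⟩ : Words Ωs)) :=
    fun a b h => Subtype.ext (by simpa [Subtype.ext_iff] using h)
  have hSumAbsP : Summable (fun ω : {ω : List ℕ // (∀ j ∈ ω, j ∈ Ωs) ∧ ω ≠ []} =>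
      Stmt4Aux.rAbs p k ι T ω.1 y) := hSumAbs.comp_injective hinj
  set Gp : ℕ → {ω : List ℕ // (∀ j ∈ ω, j ∈ Ωs) ∧ ω ≠ []} → ℝ :=
    fun n ω => if ι (rwordApply T ω.1.dropLast y) = n then Fp ω else 0 with hGp
  have hGpabs : ∀ n ω, |Gp n ω| ≤ Stmt4Aux.rAbs p k ι T ω.1 y := by
    intro n ω
    rw [hGp]
    dsimp only
    split_ifs
    · exact le_of_eq (habs ω.1 ω.2.1)
    · simpa using Stmt4Aux.rAbs_nonneg hp ω.1 ω.2.1 y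
  have hSumGp : ∀ n, Summable (Gp n) := fun n =>
    Summable.of_abs (Summable.of_nonneg_of_le (fun ω => abs_nonneg _) (hGpabs n) hSumAbsP)
  have hKIeq : ∀ n, KI Ωs p k ι T n y = ∑' ω, Gp n ω := fun n => rfl
  -- Step C
  have hdropmem : ∀ ω : {ω : List ℕ // (∀ j ∈ ω, j ∈ Ωs) ∧ ω ≠ []},
      ι (rwordApply T ω.1.dropLast y) ∈ Finset.Icc 1 N :=
    fun ω => hι _ (hmemT _ (fun j hj => ω.2.1 j ((List.dropLast_sublist ω.1).subset hj)))
  have stepC : ∑ n ∈ Finset.Icc 1 N, KI Ωs p k ι T n y = ∑' ω, Fp ω := by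
    simp only [hKIeq]
    rw [← Summable.tsum_finsetSum (fun n _ => hSumGp n)]
    apply tsum_congr
    intro ω
    rw [hGp]
    dsimp only
    rw [Finset.sum_ite_eq (Finset.Icc 1 N) (ι (rwordApply T ω.1.dropLast y)) (fun _ => Fp ω),
      if_pos (hdropmem ω)]
  -- Step B
  have stepB : ∑' ω : Words Ωs, F ω = 1 + ∑' ω, Fp ω := by
    set b : Words Ωs := ⟨[], by simp⟩ with hb
    let e0 : {ω : List ℕ // (∀ j ∈ ω, j ∈ Ωs) ∧ ω ≠ []} ≃ {x : Words Ωs // x ≠ b} :=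
      { toFun := fun ω => ⟨⟨ω.1, ω.2.1⟩, fun h => ω.2.2 (congrArg Subtype.val h)⟩
        invFun := fun x => ⟨x.1.1, x.1.2, fun h => x.2 (Subtype.ext h)⟩
        left_inv := fun _ => rfl
        right_inv := fun _ => rfl }
    rw [Summable.tsum_eq_add_tsum_ite hSumF b]
    congr 1
    have h2 : ∑' ω, Fp ω = ∑' x : {x : Words Ωs // x ≠ b}, F x.1 := by
      rw [← e0.tsum_eq (fun x : {x : Words Ωs // x ≠ b} => F x.1)]
      exact tsum_congr fun a => rfl
    rw [h2]
    calc ∑' (n : Words Ωs), (if n = b then 0 else F n)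
        = ∑' n : Words Ωs, Set.indicator {x : Words Ωs | x ≠ b} F n := by
          apply tsum_congr
          intro n
          by_cases h : n = b <;> simp [Set.indicator_apply, h]
      _ = ∑' x : {x : Words Ωs // x ≠ b}, F x.1 := (tsum_subtype _ F).symm
  -- Step D
  have stepD : ∀ n ∈ Finset.Icc 1 N, KI Ωs p k ι T n y = J n * Sav Ωs p k n := by
    intro n hn
    let e1 : Words Ωs × Ωs ≃ {ω : List ℕ // (∀ j ∈ ω, j ∈ Ωs) ∧ ω ≠ []} :=
      { toFun := fun x => ⟨x.1.1 ++ [x.2.1], ⟨fun j hj => by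
            rcases List.mem_append.1 hj with h | h
            · exact x.1.2 j h
            · rw [List.mem_singleton.1 h]; exact x.2.2, by simp⟩⟩
        invFun := fun ω =>
          (⟨ω.1.dropLast, fun j hj => ω.2.1 j ((List.dropLast_sublist ω.1).subset hj)⟩,
           ⟨ω.1.getLast ω.2.2, ω.2.1 _ (List.getLast_mem ω.2.2)⟩)
        left_inv := fun x => by
          obtain ⟨⟨ω, hω⟩, ⟨j, hj⟩⟩ := x
          simp [Prod.ext_iff, Subtype.ext_iff]
        right_inv := fun ω => Subtype.ext (List.dropLast_append_getLast ω.2.2) }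
    have hterm : ∀ x : Words Ωs × Ωs,
        (if ι (rwordApply T ((x.1.1 ++ [x.2.1]).dropLast) y) = n
            then rdelta p k ι T (x.1.1 ++ [x.2.1]) y else 0)
          = g n x.1 * (p x.2.1 / k n x.2.1) := by
      intro x
      rw [List.dropLast_concat, Stmt4Aux.rdelta_append, hg]
      dsimp only
      by_cases h : ι (rwordApply T x.1.1 y) = n
      · rw [if_pos h, if_pos h, h, hF]
      · rw [if_neg h, if_neg h, zero_mul]
    have hrw : KI Ωs p k ι T n y = ∑' x : Words Ωs × Ωs, g n x.1 * (p x.2.1 / k n x.2.1) := by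
      rw [hKIeq n, ← e1.tsum_eq (Gp n)]
      exact tsum_congr fun x => hterm x
    have hksum : Summable (fun x : Words Ωs × Ωs =>
        Stmt4Aux.rAbs p k ι T x.1.1 y * (p x.2.1 / |k n x.2.1|)) :=
      hSumAbs.mul_of_nonneg (hA2 n hn).1
        (fun ω => Stmt4Aux.rAbs_nonneg hp ω.1 ω.2 y)
        (fun j => div_nonneg (hp j.1 j.2).le (abs_nonneg _))
    have hSumh : Summable (fun x : Words Ωs × Ωs => g n x.1 * (p x.2.1 / k n x.2.1)) := by
      apply Summable.of_abs
      apply Summable.of_nonneg_of_le (fun x => abs_nonneg _) _ hksum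
      intro x
      rw [abs_mul, abs_div, abs_of_pos (hp x.2.1 x.2.2)]
      exact mul_le_mul_of_nonneg_right (hgabs n x.1)
        (div_nonneg (hp x.2.1 x.2.2).le (abs_nonneg _))
    have hSav : Summable (fun j : Ωs => p j.1 / k n j.1) := by
      apply Summable.of_abs
      apply (hA2 n hn).1.congr
      intro j
      rw [abs_div, abs_of_pos (hp j.1 j.2)]
    rw [hrw, Summable.tsum_prod' hSumh (fun b => hSav.mul_left (g n b))]
    calc (∑' (b : Words Ωs) (c : Ωs), g n b * (p c.1 / k n c.1))
        = ∑' b : Words Ωs, g n b * Sav Ωs p k n := by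
          apply tsum_congr
          intro b
          rw [tsum_mul_left]
          rfl
      _ = J n * Sav Ωs p k n := by rw [tsum_mul_right, hJ]
  -- assemble
  have key : ∀ n ∈ Finset.Icc 1 N, ((Sav Ωs p k n)⁻¹ - 1) * KI Ωs p k ι T n y
      = J n - KI Ωs p k ι T n y := by
    intro n hn
    rw [stepD n hn]
    have h := hS n hn
    field_simp
  rw [Finset.sum_congr rfl key, Finset.sum_sub_distrib, stepA, stepC, stepB]
  ring


end
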